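/- Let κ be an integrable hyperkernel on a probability space (S, μ), and let f, g : S → [0,1] be measurable functions with f(x) ≤ g(x) for every x ∈ S. Then ∫_S f·S_κ(g) dμ ≤ ∫_S g·S_κ(f) dμ (as integrals with values in [0,∞]). -/

import Mathlib

open MeasureTheory ENNReal Filter Topology

/-- The nonlinear operator `S_κ` associated to a hyperkernel `κ = (κ_r)_{r ≥ 2}`;
here `κ m` plays the role of `κ_{m+2}`. -/
noncomputable def Sop {S : Type*} [MeasurableSpace S] (μ : Measure S)
    (κ : (m : ℕ) → (Fin (m + 2) → S) → ℝ≥0∞) (f : S → ℝ) (x : S) : ℝ≥0∞ :=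
  ∑' m : ℕ, ((m : ℝ≥0∞) + 2) *
    ∫⁻ y : Fin (m + 1) → S,
      κ m (Fin.cons x y) * ENNReal.ofReal (1 - ∏ i, (1 - f (y i)))
      ∂(Measure.pi fun _ => μ)

/-- The edge kernel `κ_e` of a hyperkernel. -/
noncomputable def edgeKernel {S : Type*} [MeasurableSpace S] (μ : Measure S)
    (κ : (m : ℕ) → (Fin (m + 2) → S) → ℝ≥0∞) (x y : S) : ℝ≥0∞ :=
  ∑' m : ℕ, ((m : ℝ≥0∞) + 2) * ((m : ℝ≥0∞) + 1) *
    ∫⁻ z : Fin m → S, κ m (Fin.cons x (Fin.cons y z)) ∂(Measure.pi fun _ => μ)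

/-- The linear operator `T_κ`. -/
noncomputable def Tlin {S : Type*} [MeasurableSpace S] (μ : Measure S)
    (κ : (m : ℕ) → (Fin (m + 2) → S) → ℝ≥0∞) (f : S → ℝ) (x : S) : ℝ≥0∞ :=
  ∫⁻ y, edgeKernel μ κ x y * ENNReal.ofReal (f y) ∂μ

/-- All kernels of the family are measurable. -/
def HyperkernelMeasurable {S : Type*} [MeasurableSpace S]
    (κ : (m : ℕ) → (Fin (m + 2) → S) → ℝ≥0∞) : Prop :=
  ∀ m, Measurable (κ m)

/-- Each kernel is invariant under all permutations of its arguments. -/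
def HyperkernelSymm {S : Type*} [MeasurableSpace S]
    (κ : (m : ℕ) → (Fin (m + 2) → S) → ℝ≥0∞) : Prop :=
  ∀ m (σ : Equiv.Perm (Fin (m + 2))) (v : Fin (m + 2) → S), κ m (v ∘ σ) = κ m v

/-- Integrability of the hyperkernel: `∑_{r≥2} r ∫_{S^r} κ_r < ∞`. -/
def HyperkernelIntegrable {S : Type*} [MeasurableSpace S] (μ : Measure S)
    (κ : (m : ℕ) → (Fin (m + 2) → S) → ℝ≥0∞) : Prop :=
  ∑' m : ℕ, ((m : ℝ≥0∞) + 2) *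
    ∫⁻ v : Fin (m + 2) → S, κ m v ∂(Measure.pi fun _ => μ) ≠ ⊤

/-- `expNeg a = e^{-a}` for `a ∈ [0,∞]`, with `e^{-∞} = 0`. -/
noncomputable def expNeg (a : ℝ≥0∞) : ℝ := if a = ⊤ then 0 else Real.exp (-a.toReal)

/-- The operator `Φ_κ(f) = 1 - e^{-S_κ(f)}`. -/
noncomputable def Phi {S : Type*} [MeasurableSpace S] (μ : Measure S)
    (κ : (m : ℕ) → (Fin (m + 2) → S) → ℝ≥0∞) (f : S → ℝ) (x : S) : ℝ :=
  1 - expNeg (Sop μ κ f x)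

/-- Irreducibility of the hyperkernel. -/
def HyperkernelIrreducible {S : Type*} [MeasurableSpace S] (μ : Measure S)
    (κ : (m : ℕ) → (Fin (m + 2) → S) → ℝ≥0∞) : Prop :=
  ∀ A : Set S, MeasurableSet A →
    (∀ᵐ p ∂(μ.prod μ), p ∈ A ×ˢ Aᶜ → edgeKernel μ κ p.1 p.2 = 0) →
    μ A = 0 ∨ μ Aᶜ = 0

/-- The decreasing iterates `ρ_0 = 1`, `ρ_{t+1} = Φ_κ(ρ_t)`. -/
noncomputable def rhoSeq {S : Type*} [MeasurableSpace S] (μ : Measure S)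
    (κ : (m : ℕ) → (Fin (m + 2) → S) → ℝ≥0∞) : ℕ → S → ℝ
  | 0 => fun _ => 1
  | t + 1 => Phi μ κ (rhoSeq μ κ t)

/-- The pointwise limit `ρ_κ` of the decreasing iterates `Φ_κ^t(1)`. -/
noncomputable def rhoFun {S : Type*} [MeasurableSpace S] (μ : Measure S)
    (κ : (m : ℕ) → (Fin (m + 2) → S) → ℝ≥0∞) : S → ℝ :=
  fun x => ⨅ t : ℕ, rhoSeq μ κ t x

/-- The condition `‖T_κ‖ > 1` on the `L²(μ)` operator norm of `T_κ`. -/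
def TopNormGtOne {S : Type*} [MeasurableSpace S] (μ : Measure S)
    (κ : (m : ℕ) → (Fin (m + 2) → S) → ℝ≥0∞) : Prop :=
  ∃ h : S → ℝ, Measurable h ∧ (∀ x, 0 ≤ h x) ∧
    (∫⁻ x, ENNReal.ofReal (h x) ^ 2 ∂μ) ≤ 1 ∧ 1 < ∫⁻ x, (Tlin μ κ h x) ^ 2 ∂μ

section AuxStmt3


lemma fin_Iio_succ {n : ℕ} (i : Fin n) :
    Finset.Iio (Fin.succ i) = insert 0 ((Finset.Iio i).map (Fin.succEmb n)) := by
  ext j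
  induction j using Fin.cases with
  | zero => simp [Fin.succ_pos]
  | succ k =>
      simp [Fin.succ_lt_succ_iff, Fin.succEmb, (Fin.succ_ne_zero k),
        Fin.succ_injective, Fin.succ_inj]

lemma tele_real : ∀ (n : ℕ) (a : Fin n → ℝ),
    1 - ∏ i, (1 - a i) = ∑ i, a i * ∏ j ∈ Finset.Iio i, (1 - a j) := by
  intro n
  induction n with
  | zero => simp
  | succ n ih =>
      intro a
      rw [Fin.prod_univ_succ, Fin.sum_univ_succ]
      have h0 : Finset.Iio (0 : Fin (n+1)) = ∅ := by
        ext j; simp [Fin.pos_iff_ne_zero]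
      simp only [h0, Finset.prod_empty, mul_one]
      have hsucc : ∀ i : Fin n, ∏ j ∈ Finset.Iio (Fin.succ i), (1 - a j)
          = (1 - a 0) * ∏ j ∈ Finset.Iio i, (1 - a (Fin.succ j)) := by
        intro i
        rw [fin_Iio_succ, Finset.prod_insert (by simp [Fin.succ_ne_zero]),
          Finset.prod_map]
        rfl
      simp only [hsucc]
      have hih := ih (fun i => a (Fin.succ i))
      calc 1 - (1 - a 0) * ∏ i : Fin n, (1 - a (Fin.succ i))
          = a 0 + (1 - a 0) * (1 - ∏ i : Fin n, (1 - a (Fin.succ i))) := by ring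
        _ = a 0 + (1 - a 0) * ∑ i : Fin n, a (Fin.succ i) * ∏ j ∈ Finset.Iio i,
              (1 - a (Fin.succ j)) := by rw [hih]
        _ = a 0 + ∑ i : Fin n, a (Fin.succ i) * ((1 - a 0) * ∏ j ∈ Finset.Iio i,
              (1 - a (Fin.succ j))) := by
            rw [Finset.mul_sum]; congr 1; apply Finset.sum_congr rfl; intros; ring

lemma tele_ennreal (n : ℕ) (a : Fin n → ℝ) (h0 : ∀ i, 0 ≤ a i) (h1 : ∀ i, a i ≤ 1) :
    ENNReal.ofReal (1 - ∏ i, (1 - a i)) =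
      ∑ i : Fin n, ENNReal.ofReal (a i) * ∏ j ∈ Finset.Iio i, ENNReal.ofReal (1 - a j) := by
  rw [tele_real n a, ENNReal.ofReal_sum_of_nonneg]
  · refine Finset.sum_congr rfl fun i _ => ?_
    rw [ENNReal.ofReal_mul (h0 i), ENNReal.ofReal_prod_of_nonneg]
    intro j _; linarith [h1 j]
  · intro i _
    exact mul_nonneg (h0 i) (Finset.prod_nonneg fun j _ => by linarith [h1 j])

variable {S : Type*} [MeasurableSpace S] {μ : Measure S} [IsProbabilityMeasure μ]
  {κ : (m : ℕ) → (Fin (m + 2) → S) → ℝ≥0∞}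

lemma lintegral_comp_perm' {n : ℕ} (σ : Equiv.Perm (Fin n)) {F : (Fin n → S) → ℝ≥0∞}
    (hF : Measurable F) :
    ∫⁻ v, F (v ∘ σ) ∂(Measure.pi fun _ : Fin n => μ)
      = ∫⁻ v, F v ∂(Measure.pi fun _ : Fin n => μ) := by
  have h := (measurePreserving_piCongrLeft (fun _ : Fin n => μ) σ).symm
  have h2 := h.lintegral_comp hF
  have he : ∀ v : Fin n → S,
      (MeasurableEquiv.piCongrLeft (fun _ : Fin n => S) σ).symm v = v ∘ σ := fun v => rfl
  simpa [he] using h2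

lemma measurable_consFun {m : ℕ} :
    Measurable (fun p : S × (Fin (m+1) → S) => (Fin.cons p.1 p.2 : Fin (m+2) → S)) := by
  rw [measurable_pi_iff]
  intro j
  induction j using Fin.cases with
  | zero => simpa using measurable_fst
  | succ k =>
      have hk : Measurable fun p : S × (Fin (m+1) → S) => p.2 k :=
        (measurable_pi_apply k).comp measurable_snd
      simpa using hk

lemma expand_lemma (hmeas : ∀ m, Measurable (κ m)) (m : ℕ) (φ ψ : S → ℝ)
    (hφ : Measurable φ) (hψ : Measurable ψ) (hψ0 : ∀ x, 0 ≤ ψ x) (hψ1 : ∀ x, ψ x ≤ 1) :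
    ∫⁻ v : Fin (m+2) → S, ENNReal.ofReal (φ (v 0)) *
        (κ m v * ENNReal.ofReal (1 - ∏ i : Fin (m+1), (1 - ψ (v i.succ))))
        ∂(Measure.pi fun _ : Fin (m+2) => μ)
      = ∑ i : Fin (m+1), ∫⁻ v : Fin (m+2) → S,
          ENNReal.ofReal (φ (v 0)) * κ m v * (ENNReal.ofReal (ψ (v i.succ)) *
            ∏ j ∈ Finset.Iio i, ENNReal.ofReal (1 - ψ (v j.succ)))
          ∂(Measure.pi fun _ : Fin (m+2) => μ) := by
  have h1 : ∀ v : Fin (m+2) → S,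
      ENNReal.ofReal (φ (v 0)) * (κ m v *
        ENNReal.ofReal (1 - ∏ i : Fin (m+1), (1 - ψ (v i.succ))))
      = ∑ i : Fin (m+1), ENNReal.ofReal (φ (v 0)) * κ m v *
          (ENNReal.ofReal (ψ (v i.succ)) *
            ∏ j ∈ Finset.Iio i, ENNReal.ofReal (1 - ψ (v j.succ))) := by
    intro v
    rw [tele_ennreal (m+1) (fun i => ψ (v i.succ)) (fun i => hψ0 _) (fun i => hψ1 _)]
    rw [Finset.mul_sum, Finset.mul_sum]
    exact Finset.sum_congr rfl fun i _ => by ring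
  simp only [h1]
  rw [lintegral_finset_sum]
  intro i _
  refine Measurable.mul (Measurable.mul ?_ (hmeas m)) (Measurable.mul ?_ ?_)
  · exact (hφ.comp (measurable_pi_apply 0)).ennreal_ofReal
  · exact (hψ.comp (measurable_pi_apply _)).ennreal_ofReal
  · exact Finset.measurable_prod _ fun j _ =>
      (Measurable.const_sub (hψ.comp (measurable_pi_apply _)) 1).ennreal_ofReal

lemma key_ineq (hmeas : ∀ m, Measurable (κ m))
    (hsymm : ∀ m (σ : Equiv.Perm (Fin (m + 2))) (v : Fin (m + 2) → S), κ m (v ∘ σ) = κ m v)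
    (m : ℕ) (f g : S → ℝ) (hf : Measurable f) (hg : Measurable g)
    (hf0 : ∀ x, 0 ≤ f x) (hfg : ∀ x, f x ≤ g x) (hg1 : ∀ x, g x ≤ 1) :
    ∫⁻ v : Fin (m+2) → S, ENNReal.ofReal (f (v 0)) *
        (κ m v * ENNReal.ofReal (1 - ∏ i : Fin (m+1), (1 - g (v i.succ))))
        ∂(Measure.pi fun _ : Fin (m+2) => μ)
    ≤ ∫⁻ v : Fin (m+2) → S, ENNReal.ofReal (g (v 0)) *
        (κ m v * ENNReal.ofReal (1 - ∏ i : Fin (m+1), (1 - f (v i.succ))))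
        ∂(Measure.pi fun _ : Fin (m+2) => μ) := by
  have hg0 : ∀ x, 0 ≤ g x := fun x => (hf0 x).trans (hfg x)
  have hf1 : ∀ x, f x ≤ 1 := fun x => (hfg x).trans (hg1 x)
  rw [expand_lemma hmeas m f g hf hg hg0 hg1, expand_lemma hmeas m g f hg hf hf0 hf1]
  refine Finset.sum_le_sum fun i _ => ?_
  -- Step 1: replace g by f in the product
  have step1 : ∫⁻ v : Fin (m+2) → S,
        ENNReal.ofReal (f (v 0)) * κ m v * (ENNReal.ofReal (g (v i.succ)) *
          ∏ j ∈ Finset.Iio i, ENNReal.ofReal (1 - g (v j.succ)))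
        ∂(Measure.pi fun _ : Fin (m+2) => μ)
      ≤ ∫⁻ v : Fin (m+2) → S,
        ENNReal.ofReal (f (v 0)) * κ m v * (ENNReal.ofReal (g (v i.succ)) *
          ∏ j ∈ Finset.Iio i, ENNReal.ofReal (1 - f (v j.succ)))
        ∂(Measure.pi fun _ : Fin (m+2) => μ) := by
    refine lintegral_mono fun v => ?_
    refine mul_le_mul' le_rfl (mul_le_mul' le_rfl ?_)
    refine Finset.prod_le_prod' fun j _ => ?_
    exact ENNReal.ofReal_le_ofReal (by linarith [hfg (v j.succ)])
  refine step1.trans ?_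
  -- Step 2: swap coordinates 0 and i.succ
  set σ : Equiv.Perm (Fin (m+2)) := Equiv.swap 0 i.succ with hσ
  set F : (Fin (m+2) → S) → ℝ≥0∞ := fun v =>
    ENNReal.ofReal (g (v 0)) * κ m v * (ENNReal.ofReal (f (v i.succ)) *
      ∏ j ∈ Finset.Iio i, ENNReal.ofReal (1 - f (v j.succ))) with hFdef
  have hF : Measurable F := by
    refine Measurable.mul (Measurable.mul ?_ (hmeas m)) (Measurable.mul ?_ ?_)
    · exact (hg.comp (measurable_pi_apply 0)).ennreal_ofReal
    · exact (hf.comp (measurable_pi_apply _)).ennreal_ofReal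
    · exact Finset.measurable_prod _ fun j _ =>
        (Measurable.const_sub (hf.comp (measurable_pi_apply _)) 1).ennreal_ofReal
  have hswap := lintegral_comp_perm' (μ := μ) σ hF
  have hpt : ∀ v : Fin (m+2) → S, F (v ∘ σ)
      = ENNReal.ofReal (f (v 0)) * κ m v * (ENNReal.ofReal (g (v i.succ)) *
          ∏ j ∈ Finset.Iio i, ENNReal.ofReal (1 - f (v j.succ))) := by
    intro v
    have h0 : (v ∘ σ) 0 = v i.succ := by simp [hσ, Equiv.swap_apply_left]
    have hi : (v ∘ σ) i.succ = v 0 := by simp [hσ, Equiv.swap_apply_right]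
    have hj : ∀ j ∈ Finset.Iio i, (v ∘ σ) j.succ = v j.succ := by
      intro j hj
      have hjlt : j < i := Finset.mem_Iio.mp hj
      have hne1 : (j.succ : Fin (m+2)) ≠ 0 := Fin.succ_ne_zero j
      have hne2 : (j.succ : Fin (m+2)) ≠ i.succ := by
        simp only [ne_eq, Fin.succ_inj]
        exact ne_of_lt hjlt
      simp [hσ, Function.comp, Equiv.swap_apply_of_ne_of_ne hne1 hne2]
    rw [hFdef]
    simp only [hsymm m σ v, h0, hi]
    rw [Finset.prod_congr rfl fun j hjmem => by rw [hj j hjmem]]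
    ring
  exact le_of_eq ((lintegral_congr fun v => (hpt v).symm).trans hswap)


lemma assemble (hmeas : ∀ m, Measurable (κ m)) (φ ψ : S → ℝ)
    (hφ : Measurable φ) (hψ : Measurable ψ) :
    ∫⁻ x, ENNReal.ofReal (φ x) * Sop μ κ ψ x ∂μ
      = ∑' m : ℕ, ((m : ℝ≥0∞) + 2) *
        ∫⁻ v : Fin (m + 2) → S,
          ENNReal.ofReal (φ (v 0)) *
            (κ m v * ENNReal.ofReal (1 - ∏ i : Fin (m + 1), (1 - ψ (v i.succ))))
          ∂(Measure.pi fun _ : Fin (m + 2) => μ) := by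
  have hH : ∀ m : ℕ, Measurable (fun p : S × (Fin (m+1) → S) =>
      ENNReal.ofReal (φ p.1) * (κ m (Fin.cons p.1 p.2) *
        ENNReal.ofReal (1 - ∏ i : Fin (m+1), (1 - ψ (p.2 i))))) := by
    intro m
    refine Measurable.mul ?_ (Measurable.mul ?_ ?_)
    · exact (hφ.comp measurable_fst).ennreal_ofReal
    · exact (hmeas m).comp measurable_consFun
    · refine Measurable.ennreal_ofReal (Measurable.const_sub ?_ 1)
      exact Finset.measurable_prod _ fun i _ =>
        Measurable.const_sub (hψ.comp ((measurable_pi_apply i).comp measurable_snd)) 1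
  have key : ∀ m : ℕ,
      ∫⁻ x, ENNReal.ofReal (φ x) * ∫⁻ y : Fin (m+1) → S,
          κ m (Fin.cons x y) * ENNReal.ofReal (1 - ∏ i, (1 - ψ (y i)))
          ∂(Measure.pi fun _ => μ) ∂μ
      = ∫⁻ v : Fin (m + 2) → S,
          ENNReal.ofReal (φ (v 0)) *
            (κ m v * ENNReal.ofReal (1 - ∏ i : Fin (m + 1), (1 - ψ (v i.succ))))
          ∂(Measure.pi fun _ : Fin (m + 2) => μ) := by
    intro m
    have h1 : ∀ x : S, ENNReal.ofReal (φ x) * ∫⁻ y : Fin (m+1) → S,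
          κ m (Fin.cons x y) * ENNReal.ofReal (1 - ∏ i, (1 - ψ (y i)))
          ∂(Measure.pi fun _ => μ)
        = ∫⁻ y : Fin (m+1) → S, ENNReal.ofReal (φ x) * (κ m (Fin.cons x y) *
            ENNReal.ofReal (1 - ∏ i, (1 - ψ (y i)))) ∂(Measure.pi fun _ => μ) := by
      intro x
      rw [lintegral_const_mul' _ _ ENNReal.ofReal_ne_top]
    simp only [h1]
    rw [← lintegral_prod _ (hH m).aemeasurable]
    rw [← (measurePreserving_piFinSuccAbove (fun _ : Fin (m+2) => μ) 0).lintegral_comp (hH m)]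
    refine lintegral_congr fun v => ?_
    have hv : (MeasurableEquiv.piFinSuccAbove (fun _ : Fin (m+2) => S) 0) v
        = (v 0, Fin.tail v) := by
      simp [MeasurableEquiv.piFinSuccAbove_apply]
    rw [hv]
    have hc : Fin.cons (v 0) (Fin.tail v) = v := Fin.cons_self_tail v
    simp only [hc]
    rfl
  unfold Sop
  have h2 : ∀ x : S, ENNReal.ofReal (φ x) * (∑' m : ℕ, ((m : ℝ≥0∞) + 2) *
      ∫⁻ y : Fin (m + 1) → S, κ m (Fin.cons x y) *
        ENNReal.ofReal (1 - ∏ i, (1 - ψ (y i))) ∂(Measure.pi fun _ => μ))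
      = ∑' m : ℕ, ((m : ℝ≥0∞) + 2) * (ENNReal.ofReal (φ x) *
      ∫⁻ y : Fin (m + 1) → S, κ m (Fin.cons x y) *
        ENNReal.ofReal (1 - ∏ i, (1 - ψ (y i))) ∂(Measure.pi fun _ => μ)) := by
    intro x
    rw [← ENNReal.tsum_mul_left]
    exact tsum_congr fun m => by ring
  simp only [h2]
  rw [lintegral_tsum]
  · refine tsum_congr fun m => ?_
    rw [lintegral_const_mul' _ _ (by simp : ((m : ℝ≥0∞) + 2) ≠ ⊤), key m]
  · intro m
    have hH2 : Measurable (fun p : S × (Fin (m+1) → S) =>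
        κ m (Fin.cons p.1 p.2) *
          ENNReal.ofReal (1 - ∏ i : Fin (m+1), (1 - ψ (p.2 i)))) := by
      refine Measurable.mul ((hmeas m).comp measurable_consFun) ?_
      refine Measurable.ennreal_ofReal (Measurable.const_sub ?_ 1)
      exact Finset.measurable_prod _ fun i _ =>
        Measurable.const_sub (hψ.comp ((measurable_pi_apply i).comp measurable_snd)) 1
    have hJ : Measurable fun x : S => ∫⁻ y : Fin (m+1) → S,
        κ m (Fin.cons x y) * ENNReal.ofReal (1 - ∏ i, (1 - ψ (y i)))
        ∂(Measure.pi fun _ => μ) := Measurable.lintegral_prod_right' hH2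
    exact ((hφ.ennreal_ofReal.mul hJ).const_mul _).aemeasurable

end AuxStmt3

/-- Lemma 2.2, `l_fSg`, of the paper.
For an integrable hyperkernel `κ` and measurable `0 ≤ f ≤ g ≤ 1`,
`∫ f·S_κ(g) dμ ≤ ∫ g·S_κ(f) dμ`. -/
theorem stmt3 {S : Type*} [MeasurableSpace S] (μ : Measure S) [IsProbabilityMeasure μ]
    (κ : (m : ℕ) → (Fin (m + 2) → S) → ℝ≥0∞)
    (hmeas : HyperkernelMeasurable κ) (hsymm : HyperkernelSymm κ)
    (hint : HyperkernelIntegrable μ κ)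
    (f g : S → ℝ) (hf : Measurable f) (hg : Measurable g)
    (hf0 : ∀ x, 0 ≤ f x) (hfg : ∀ x, f x ≤ g x) (hg1 : ∀ x, g x ≤ 1) :
    ∫⁻ x, ENNReal.ofReal (f x) * Sop μ κ g x ∂μ ≤
      ∫⁻ x, ENNReal.ofReal (g x) * Sop μ κ f x ∂μ := by
  rw [assemble hmeas f g hf hg, assemble hmeas g f hg hf]
  refine ENNReal.tsum_le_tsum fun m => ?_
  exact mul_le_mul' le_rfl (key_ineq hmeas hsymm m f g hf hg hf0 hfg hg1)
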